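/- In the poset [2] × [2] (the diamond/minuscule poset of type A₃ with m = 2), promotion pro = t_top ∘ t_right ∘ t_left ∘ t_bottom (toggling in a linear extension order compatible with the poset, one toggle per element) acting on order-reversing maps ρ : [2]×[2] → {0,…,N} satisfies pro⁴ = id, and 4 is the exact order (there exists ρ with pro^k(ρ) ≠ ρ for 0 < k < 4, when N ≥ 1). -/

import Mathlib

open scoped Classical in
/-- Max of `ρ` over the upper covers of `x` (0 if `x` is maximal). -/
noncomputable def upMax {P : Type*} [PartialOrder P] [Fintype P]
    (ρ : P → ℕ) (x : P) : ℕ :=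
  (Finset.univ.filter fun y => x ⋖ y).sup ρ

open scoped Classical in
/-- Min of `ρ` over the lower covers of `x` (N if `x` is minimal). -/
noncomputable def downMin {P : Type*} [PartialOrder P] [Fintype P]
    (N : ℕ) (ρ : P → ℕ) (x : P) : ℕ :=
  (Finset.univ.filter fun y => y ⋖ x).fold min N ρ

open scoped Classical in
/-- The toggle of `ρ` at `x`:
`(t_x ρ)(x) = max_{x ⋖ y₁} ρ(y₁) + min_{y₂ ⋖ x} ρ(y₂) − ρ(x)`,
with the max interpreted as `0` if `x` is maximal and the min as `N` if `x` is
minimal, and `(t_x ρ)(y) = ρ(y)` for `y ≠ x`. -/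
noncomputable def toggle {P : Type*} [PartialOrder P] [Fintype P]
    (N : ℕ) (x : P) (ρ : P → ℕ) (y : P) : ℕ :=
  if y = x then upMax ρ x + downMin N ρ x - ρ x else ρ y

open scoped Classical in
/-- Promotion on the poset `[2] × [2]` (modeled as `Fin 2 × Fin 2` with componentwise
order): the composition of the four toggles, toggling along a linear extension from
the top down, `pro = t_{(0,0)} ∘ t_{(1,0)} ∘ t_{(0,1)} ∘ t_{(1,1)}`. -/
noncomputable def pro (N : ℕ) (ρ : Fin 2 × Fin 2 → ℕ) : Fin 2 × Fin 2 → ℕ :=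
  toggle N (0, 0) (toggle N (1, 0) (toggle N (0, 1) (toggle N (1, 1) ρ)))

section AuxStmt16

instance stmt16LTdec : @DecidableRel (Fin 2 × Fin 2) (Fin 2 × Fin 2) (· < ·) := fun a b =>
  decidable_of_iff (a ≤ b ∧ ¬ b ≤ a) lt_iff_le_not_ge.symm

instance stmt16CovDec : @DecidableRel (Fin 2 × Fin 2) (Fin 2 × Fin 2) (· ⋖ ·) := fun a b =>
  decidable_of_iff (a < b ∧ ∀ c, a < c → ¬ c < b) Iff.rfl

lemma stmt16_filtU00 : (@Finset.filter _ (fun y : Fin 2 × Fin 2 => (0,0) ⋖ y)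
    (fun _ => Classical.propDecidable _) Finset.univ)
    = {((0:Fin 2),(1:Fin 2)), ((1:Fin 2),(0:Fin 2))} := by
  ext y
  simp only [Finset.mem_filter, Finset.mem_univ, true_and, Finset.mem_insert,
    Finset.mem_singleton]
  revert y; decide

lemma stmt16_filtU01 : (@Finset.filter _ (fun y : Fin 2 × Fin 2 => (0,1) ⋖ y)
    (fun _ => Classical.propDecidable _) Finset.univ) = {((1:Fin 2),(1:Fin 2))} := by
  ext y
  simp only [Finset.mem_filter, Finset.mem_univ, true_and, Finset.mem_singleton]
  revert y; decide

lemma stmt16_filtU10 : (@Finset.filter _ (fun y : Fin 2 × Fin 2 => (1,0) ⋖ y)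
    (fun _ => Classical.propDecidable _) Finset.univ) = {((1:Fin 2),(1:Fin 2))} := by
  ext y
  simp only [Finset.mem_filter, Finset.mem_univ, true_and, Finset.mem_singleton]
  revert y; decide

lemma stmt16_filtU11 : (@Finset.filter _ (fun y : Fin 2 × Fin 2 => (1,1) ⋖ y)
    (fun _ => Classical.propDecidable _) Finset.univ) = ∅ := by
  ext y
  simp only [Finset.mem_filter, Finset.mem_univ, true_and, Finset.notMem_empty,
    iff_false]
  revert y; decide

lemma stmt16_filtD00 : (@Finset.filter _ (fun y : Fin 2 × Fin 2 => y ⋖ (0,0))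
    (fun _ => Classical.propDecidable _) Finset.univ) = ∅ := by
  ext y
  simp only [Finset.mem_filter, Finset.mem_univ, true_and, Finset.notMem_empty,
    iff_false]
  revert y; decide

lemma stmt16_filtD01 : (@Finset.filter _ (fun y : Fin 2 × Fin 2 => y ⋖ (0,1))
    (fun _ => Classical.propDecidable _) Finset.univ) = {((0:Fin 2),(0:Fin 2))} := by
  ext y
  simp only [Finset.mem_filter, Finset.mem_univ, true_and, Finset.mem_singleton]
  revert y; decide

lemma stmt16_filtD10 : (@Finset.filter _ (fun y : Fin 2 × Fin 2 => y ⋖ (1,0))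
    (fun _ => Classical.propDecidable _) Finset.univ) = {((0:Fin 2),(0:Fin 2))} := by
  ext y
  simp only [Finset.mem_filter, Finset.mem_univ, true_and, Finset.mem_singleton]
  revert y; decide

lemma stmt16_filtD11 : (@Finset.filter _ (fun y : Fin 2 × Fin 2 => y ⋖ (1,1))
    (fun _ => Classical.propDecidable _) Finset.univ)
    = {((0:Fin 2),(1:Fin 2)), ((1:Fin 2),(0:Fin 2))} := by
  ext y
  simp only [Finset.mem_filter, Finset.mem_univ, true_and, Finset.mem_insert,
    Finset.mem_singleton]
  revert y; decide

lemma stmt16_upMax00 (ρ : Fin 2 × Fin 2 → ℕ) :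
    upMax ρ (0,0) = max (ρ (0,1)) (ρ (1,0)) := by
  rw [upMax, stmt16_filtU00, Finset.sup_insert, Finset.sup_singleton]

lemma stmt16_upMax01 (ρ : Fin 2 × Fin 2 → ℕ) : upMax ρ (0,1) = ρ (1,1) := by
  rw [upMax, stmt16_filtU01, Finset.sup_singleton]

lemma stmt16_upMax10 (ρ : Fin 2 × Fin 2 → ℕ) : upMax ρ (1,0) = ρ (1,1) := by
  rw [upMax, stmt16_filtU10, Finset.sup_singleton]

lemma stmt16_upMax11 (ρ : Fin 2 × Fin 2 → ℕ) : upMax ρ (1,1) = 0 := by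
  rw [upMax, stmt16_filtU11, Finset.sup_empty]; rfl

lemma stmt16_downMin00 (N : ℕ) (ρ : Fin 2 × Fin 2 → ℕ) : downMin N ρ (0,0) = N := by
  rw [downMin, stmt16_filtD00, Finset.fold_empty]

lemma stmt16_downMin01 (N : ℕ) (ρ : Fin 2 × Fin 2 → ℕ) :
    downMin N ρ (0,1) = min (ρ (0,0)) N := by
  rw [downMin, stmt16_filtD01, Finset.fold_singleton]

lemma stmt16_downMin10 (N : ℕ) (ρ : Fin 2 × Fin 2 → ℕ) :
    downMin N ρ (1,0) = min (ρ (0,0)) N := by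
  rw [downMin, stmt16_filtD10, Finset.fold_singleton]

lemma stmt16_downMin11 (N : ℕ) (ρ : Fin 2 × Fin 2 → ℕ) :
    downMin N ρ (1,1) = min (ρ (0,1)) (min (ρ (1,0)) N) := by
  rw [downMin, stmt16_filtD11, Finset.fold_insert (by decide), Finset.fold_singleton]

/-- Explicit formulas for the four values of `pro N ρ`. -/
lemma stmt16_pro_val (N : ℕ) (ρ : Fin 2 × Fin 2 → ℕ) :
    pro N ρ (0,0) =
      max (min (ρ (0,1)) (min (ρ (1,0)) N) - ρ (1,1) + min (ρ (0,0)) N - ρ (0,1))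
          (min (ρ (0,1)) (min (ρ (1,0)) N) - ρ (1,1) + min (ρ (0,0)) N - ρ (1,0))
        + N - ρ (0,0) ∧
    pro N ρ (0,1) =
      min (ρ (0,1)) (min (ρ (1,0)) N) - ρ (1,1) + min (ρ (0,0)) N - ρ (0,1) ∧
    pro N ρ (1,0) =
      min (ρ (0,1)) (min (ρ (1,0)) N) - ρ (1,1) + min (ρ (0,0)) N - ρ (1,0) ∧
    pro N ρ (1,1) = min (ρ (0,1)) (min (ρ (1,0)) N) - ρ (1,1) := by
  have h11 : toggle N (1,1) ρ (1,1) = min (ρ (0,1)) (min (ρ (1,0)) N) - ρ (1,1) := by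
    rw [toggle, if_pos rfl, stmt16_upMax11, stmt16_downMin11, Nat.zero_add]
  have e01 : toggle N (1,1) ρ (0,1) = ρ (0,1) := by rw [toggle, if_neg (by decide)]
  have e10 : toggle N (1,1) ρ (1,0) = ρ (1,0) := by rw [toggle, if_neg (by decide)]
  have e00 : toggle N (1,1) ρ (0,0) = ρ (0,0) := by rw [toggle, if_neg (by decide)]
  set ρ1 := toggle N (1,1) ρ with hρ1
  have h01 : toggle N (0,1) ρ1 (0,1) = ρ1 (1,1) + min (ρ1 (0,0)) N - ρ1 (0,1) := by
    rw [toggle, if_pos rfl, stmt16_upMax01, stmt16_downMin01]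
  have f00 : toggle N (0,1) ρ1 (0,0) = ρ1 (0,0) := by rw [toggle, if_neg (by decide)]
  have f10 : toggle N (0,1) ρ1 (1,0) = ρ1 (1,0) := by rw [toggle, if_neg (by decide)]
  have f11 : toggle N (0,1) ρ1 (1,1) = ρ1 (1,1) := by rw [toggle, if_neg (by decide)]
  set ρ2 := toggle N (0,1) ρ1 with hρ2
  have h10 : toggle N (1,0) ρ2 (1,0) = ρ2 (1,1) + min (ρ2 (0,0)) N - ρ2 (1,0) := by
    rw [toggle, if_pos rfl, stmt16_upMax10, stmt16_downMin10]
  have g00 : toggle N (1,0) ρ2 (0,0) = ρ2 (0,0) := by rw [toggle, if_neg (by decide)]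
  have g01 : toggle N (1,0) ρ2 (0,1) = ρ2 (0,1) := by rw [toggle, if_neg (by decide)]
  have g11 : toggle N (1,0) ρ2 (1,1) = ρ2 (1,1) := by rw [toggle, if_neg (by decide)]
  set ρ3 := toggle N (1,0) ρ2 with hρ3
  have h00 : toggle N (0,0) ρ3 (0,0) = max (ρ3 (0,1)) (ρ3 (1,0)) + N - ρ3 (0,0) := by
    rw [toggle, if_pos rfl, stmt16_upMax00, stmt16_downMin00]
  have k01 : toggle N (0,0) ρ3 (0,1) = ρ3 (0,1) := by rw [toggle, if_neg (by decide)]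
  have k10 : toggle N (0,0) ρ3 (1,0) = ρ3 (1,0) := by rw [toggle, if_neg (by decide)]
  have k11 : toggle N (0,0) ρ3 (1,1) = ρ3 (1,1) := by rw [toggle, if_neg (by decide)]
  have hp : pro N ρ = toggle N (0,0) ρ3 := rfl
  refine ⟨?_, ?_, ?_, ?_⟩ <;>
    simp only [hp, h00, k01, k10, k11, g00, g01, g11, h10, f00, f10, f11, h01,
      e00, e01, e10, h11]

/-- One promotion step in closed form, with preservation of the constraints. -/
lemma stmt16_step (N a b c d a' b' c' d' : ℕ)
    (hba : b ≤ a) (hca : c ≤ a) (hdb : d ≤ b) (hdc : d ≤ c) (haN : a ≤ N)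
    (hA : a' = max (min b (min c N) - d + min a N - b)
        (min b (min c N) - d + min a N - c) + N - a)
    (hB : b' = min b (min c N) - d + min a N - b)
    (hC : c' = min b (min c N) - d + min a N - c)
    (hD : d' = min b (min c N) - d) :
    (a' + d = N ∧ b' + b + d = min b c + a ∧ c' + c + d = min b c + a ∧
      d' + d = min b c) ∧
    (b' ≤ a' ∧ c' ≤ a' ∧ d' ≤ b' ∧ d' ≤ c' ∧ a' ≤ N) := by
  omega

end AuxStmt16

/-- On reverse plane partitions of `[2] × [2]` with entries in `[0, N]`, promotion
satisfies `pro⁴ = id`, and (for `N ≥ 1`) `4` is the exact order. -/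
theorem stmt_16 (N : ℕ) :
    (∀ ρ : Fin 2 × Fin 2 → ℕ, Antitone ρ → (∀ y, ρ y ≤ N) → (pro N)^[4] ρ = ρ) ∧
    (1 ≤ N → ∃ ρ : Fin 2 × Fin 2 → ℕ, Antitone ρ ∧ (∀ y, ρ y ≤ N) ∧
      ∀ k : ℕ, 0 < k → k < 4 → (pro N)^[k] ρ ≠ ρ) := by
  constructor
  · intro ρ hA hB
    have hba : ρ (0,1) ≤ ρ (0,0) := hA (by decide)
    have hca : ρ (1,0) ≤ ρ (0,0) := hA (by decide)
    have hdb : ρ (1,1) ≤ ρ (0,1) := hA (by decide)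
    have hdc : ρ (1,1) ≤ ρ (1,0) := hA (by decide)
    have hN0 := hB (0,0)
    obtain ⟨A1, B1, C1, D1⟩ := stmt16_pro_val N ρ
    obtain ⟨A2, B2, C2, D2⟩ := stmt16_pro_val N (pro N ρ)
    obtain ⟨A3, B3, C3, D3⟩ := stmt16_pro_val N (pro N (pro N ρ))
    obtain ⟨A4, B4, C4, D4⟩ := stmt16_pro_val N (pro N (pro N (pro N ρ)))
    have h4 : (pro N)^[4] ρ = pro N (pro N (pro N (pro N ρ))) := rfl
    set a0 := ρ (0,0) with ha0
    set b0 := ρ (0,1) with hb0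
    set c0 := ρ (1,0) with hc0
    set d0 := ρ (1,1) with hd0
    set a1 := pro N ρ (0,0) with ha1
    set b1 := pro N ρ (0,1) with hb1
    set c1 := pro N ρ (1,0) with hc1
    set d1 := pro N ρ (1,1) with hd1
    set a2 := pro N (pro N ρ) (0,0) with ha2
    set b2 := pro N (pro N ρ) (0,1) with hb2
    set c2 := pro N (pro N ρ) (1,0) with hc2
    set d2 := pro N (pro N ρ) (1,1) with hd2
    set a3 := pro N (pro N (pro N ρ)) (0,0) with ha3
    set b3 := pro N (pro N (pro N ρ)) (0,1) with hb3
    set c3 := pro N (pro N (pro N ρ)) (1,0) with hc3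
    set d3 := pro N (pro N (pro N ρ)) (1,1) with hd3
    set a4 := pro N (pro N (pro N (pro N ρ))) (0,0) with ha4
    set b4 := pro N (pro N (pro N (pro N ρ))) (0,1) with hb4
    set c4 := pro N (pro N (pro N (pro N ρ))) (1,0) with hc4
    set d4 := pro N (pro N (pro N (pro N ρ))) (1,1) with hd4
    obtain ⟨E1, F1a, F1b, F1c, F1d, F1N⟩ :=
      stmt16_step N a0 b0 c0 d0 a1 b1 c1 d1 hba hca hdb hdc hN0 A1 B1 C1 D1
    obtain ⟨E2, F2a, F2b, F2c, F2d, F2N⟩ :=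
      stmt16_step N a1 b1 c1 d1 a2 b2 c2 d2 F1a F1b F1c F1d F1N A2 B2 C2 D2
    obtain ⟨E3, F3a, F3b, F3c, F3d, F3N⟩ :=
      stmt16_step N a2 b2 c2 d2 a3 b3 c3 d3 F2a F2b F2c F2d F2N A3 B3 C3 D3
    obtain ⟨E4, _, _, _, _, _⟩ :=
      stmt16_step N a3 b3 c3 d3 a4 b4 c4 d4 F3a F3b F3c F3d F3N A4 B4 C4 D4
    obtain ⟨E1a, E1b, E1c, E1d⟩ := E1
    obtain ⟨E2a, E2b, E2c, E2d⟩ := E2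
    obtain ⟨E3a, E3b, E3c, E3d⟩ := E3
    obtain ⟨E4a, E4b, E4c, E4d⟩ := E4
    clear A1 B1 C1 D1 A2 B2 C2 D2 A3 B3 C3 D3 A4 B4 C4 D4
    clear_value a0 b0 c0 d0 a1 b1 c1 d1 a2 b2 c2 d2 a3 b3 c3 d3 a4 b4 c4 d4
    have G00 : a4 = a0 := by
      clear ha0 hb0 hc0 hd0 ha1 hb1 hc1 hd1 ha2 hb2 hc2 hd2 ha3 hb3 hc3 hd3
        ha4 hb4 hc4 hd4
      omega
    have G01 : b4 = b0 := by
      clear ha0 hb0 hc0 hd0 ha1 hb1 hc1 hd1 ha2 hb2 hc2 hd2 ha3 hb3 hc3 hd3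
        ha4 hb4 hc4 hd4
      omega
    have G10 : c4 = c0 := by
      clear ha0 hb0 hc0 hd0 ha1 hb1 hc1 hd1 ha2 hb2 hc2 hd2 ha3 hb3 hc3 hd3
        ha4 hb4 hc4 hd4
      omega
    have G11 : d4 = d0 := by
      clear ha0 hb0 hc0 hd0 ha1 hb1 hc1 hd1 ha2 hb2 hc2 hd2 ha3 hb3 hc3 hd3
        ha4 hb4 hc4 hd4
      omega
    funext p
    rw [h4]
    rcases (by decide :
        ∀ q : Fin 2 × Fin 2, q = (0,0) ∨ q = (0,1) ∨ q = (1,0) ∨ q = (1,1)) p with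
      h | h | h | h <;> subst h
    · rw [← ha4, ← ha0]; exact G00
    · rw [← hb4, ← hb0]; exact G01
    · rw [← hc4, ← hc0]; exact G10
    · rw [← hd4, ← hd0]; exact G11
  · intro hN
    refine ⟨fun _ => N, fun _ _ _ => le_rfl, fun _ => le_rfl, ?_⟩
    generalize hρ : (fun _ : Fin 2 × Fin 2 => N) = ρ
    have hρv : ∀ q, ρ q = N := fun q => by rw [← hρ]
    obtain ⟨A1, B1, C1, D1⟩ := stmt16_pro_val N ρ
    obtain ⟨A2, B2, C2, D2⟩ := stmt16_pro_val N (pro N ρ)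
    obtain ⟨A3, B3, C3, D3⟩ := stmt16_pro_val N (pro N (pro N ρ))
    simp only [hρv] at A1 B1 C1 D1
    set a1 := pro N ρ (0,0) with ha1
    set b1 := pro N ρ (0,1) with hb1
    set c1 := pro N ρ (1,0) with hc1
    set d1 := pro N ρ (1,1) with hd1
    set a2 := pro N (pro N ρ) (0,0) with ha2
    set b2 := pro N (pro N ρ) (0,1) with hb2
    set c2 := pro N (pro N ρ) (1,0) with hc2
    set d2 := pro N (pro N ρ) (1,1) with hd2
    set a3 := pro N (pro N (pro N ρ)) (0,0) with ha3
    set b3 := pro N (pro N (pro N ρ)) (0,1) with hb3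
    set c3 := pro N (pro N (pro N ρ)) (1,0) with hc3
    set d3 := pro N (pro N (pro N ρ)) (1,1) with hd3
    obtain ⟨E1, F1a, F1b, F1c, F1d, F1N⟩ :=
      stmt16_step N N N N N a1 b1 c1 d1 le_rfl le_rfl le_rfl le_rfl le_rfl
        A1 B1 C1 D1
    obtain ⟨E2, F2a, F2b, F2c, F2d, F2N⟩ :=
      stmt16_step N a1 b1 c1 d1 a2 b2 c2 d2 F1a F1b F1c F1d F1N A2 B2 C2 D2
    obtain ⟨E3, _, _, _, _, _⟩ :=
      stmt16_step N a2 b2 c2 d2 a3 b3 c3 d3 F2a F2b F2c F2d F2N A3 B3 C3 D3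
    obtain ⟨E1a, E1b, E1c, E1d⟩ := E1
    obtain ⟨E2a, E2b, E2c, E2d⟩ := E2
    obtain ⟨E3a, E3b, E3c, E3d⟩ := E3
    clear A1 B1 C1 D1 A2 B2 C2 D2 A3 B3 C3 D3
    intro k hk0 hk4
    interval_cases k
    · intro h
      have hh := congrFun h (1,1)
      rw [show (pro N)^[1] ρ = pro N ρ from rfl, ← hd1] at hh
      simp only [hρv] at hh
      clear h ha1 hb1 hc1 hd1 ha2 hb2 hc2 hd2 ha3 hb3 hc3 hd3
      clear_value a1 b1 c1 d1 a2 b2 c2 d2 a3 b3 c3 d3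
      omega
    · intro h
      have hh := congrFun h (0,1)
      rw [show (pro N)^[2] ρ = pro N (pro N ρ) from rfl, ← hb2] at hh
      simp only [hρv] at hh
      clear h ha1 hb1 hc1 hd1 ha2 hb2 hc2 hd2 ha3 hb3 hc3 hd3
      clear_value a1 b1 c1 d1 a2 b2 c2 d2 a3 b3 c3 d3
      omega
    · intro h
      have hh := congrFun h (1,1)
      rw [show (pro N)^[3] ρ = pro N (pro N (pro N ρ)) from rfl, ← hd3] at hh
      simp only [hρv] at hh
      clear h ha1 hb1 hc1 hd1 ha2 hb2 hc2 hd2 ha3 hb3 hc3 hd3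
      clear_value a1 b1 c1 d1 a2 b2 c2 d2 a3 b3 c3 d3
      omega
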